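/- Suppose m : (0,∞) → ℝ satisfies m(c) < 0 for all c > 0 and m(k²c) < k²·m(c) for all c > 0 and k > 1. Then m is strictly subadditive: for all c₁, c₂ > 0, m(c₁ + c₂) < m(c₁) + m(c₂). -/
import Mathlib

lemma key_lemma (m : ℝ → ℝ)
    (hsub : ∀ c > (0:ℝ), ∀ k > (1:ℝ), m (k^2 * c) < k^2 * m c) :
    ∀ a b : ℝ, 0 < a → a < b → m b < (b / a) * m a := by
  intro a b ha hab
  have hba : (1:ℝ) < b / a := (one_lt_div ha).mpr hab
  have hk : Real.sqrt (b / a) > 1 := by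
    rw [show (1:ℝ) = Real.sqrt 1 by simp]
    exact Real.sqrt_lt_sqrt (by norm_num) hba
  have hsq : (Real.sqrt (b / a))^2 = b / a := Real.sq_sqrt (by positivity)
  have := hsub a ha _ hk
  rw [hsq, div_mul_cancel₀ _ (ne_of_gt ha)] at this
  exact this

/-- if m(c) < 0 for all c > 0 and m(k²c) < k²m(c) for all k > 1,
then m is strictly subadditive. -/
theorem stmt1 (m : ℝ → ℝ)
    (hneg : ∀ c > (0:ℝ), m c < 0)
    (hsub : ∀ c > (0:ℝ), ∀ k > (1:ℝ), m (k^2 * c) < k^2 * m c) :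
    ∀ c₁ > (0:ℝ), ∀ c₂ > (0:ℝ), m (c₁ + c₂) < m c₁ + m c₂ := by
  have key := key_lemma m hsub
  intro c₁ h₁ c₂ h₂
  rcases lt_trichotomy c₁ c₂ with h | h | h
  · have h1 := key c₂ (c₁ + c₂) h₂ (by linarith)
    have h2 := key c₁ c₂ h₁ h
    have hm1 := hneg c₂ h₂
    rw [div_mul_eq_mul_div, lt_div_iff₀ h₁] at h2
    rw [div_mul_eq_mul_div, lt_div_iff₀ h₂] at h1
    nlinarith
  · subst h
    have h1 := key c₁ (c₁ + c₁) h₁ (by linarith)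
    have : (c₁ + c₁) / c₁ = 2 := by field_simp; ring
    rw [this] at h1; linarith
  · have h1 := key c₁ (c₁ + c₂) h₁ (by linarith)
    have h2 := key c₂ c₁ h₂ h
    have hm1 := hneg c₁ h₁
    rw [div_mul_eq_mul_div, lt_div_iff₀ h₂] at h2
    rw [div_mul_eq_mul_div, lt_div_iff₀ h₁] at h1
    nlinarith
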